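/- arXiv:2603.27843 — 5 statements merged into one kernel-verified Lean document; each statement's English description precedes it below -/
import Mathlib

section
/- If X | θ ~ N(θ,1), θ | ξ ~ N(ξ,c²), ξ ~ H, then the posterior mean of θ given X equals α X + (1-α) E[ξ | X], where α = c²/(c²+1). -/
open MeasureTheory ProbabilityTheory Real

open scoped NNReal

lemma gauss_symm (a b : ℝ) (v : ℝ≥0) : gaussianPDFReal a v b = gaussianPDFReal b v a := by
  unfold gaussianPDFReal
  ring_nf

lemma gauss_cont (v : ℝ≥0) : Continuous (fun p : ℝ × ℝ => gaussianPDFReal p.1 v p.2) := by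
  unfold gaussianPDFReal
  fun_prop

lemma gauss_le (a b : ℝ) (v : ℝ≥0) : gaussianPDFReal a v b ≤ (√(2 * π * v))⁻¹ := by
  unfold gaussianPDFReal
  have h1 : rexp (-(b - a) ^ 2 / (2 * (v:ℝ))) ≤ 1 := by
    apply Real.exp_le_one_iff.2
    have h2 : (0:ℝ) ≤ (b - a)^2 := sq_nonneg _
    have h3 : (0:ℝ) ≤ (v:ℝ) := v.2
    rcases eq_or_lt_of_le h3 with h | h
    · simp [← h]
    · rw [div_nonpos_iff]; right; constructor <;> nlinarith
  have h4 : (0:ℝ) ≤ (√(2 * π * v))⁻¹ := by positivity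
  calc (√(2 * π * ↑v))⁻¹ * rexp (-(b - a) ^ 2 / (2 * ↑v)) ≤ (√(2 * π * ↑v))⁻¹ * 1 :=
        mul_le_mul_of_nonneg_left h1 h4
    _ = (√(2 * π * ↑v))⁻¹ := mul_one _

lemma gauss_cont' (v : ℝ≥0) (t : ℝ) : Continuous (fun ξ : ℝ => gaussianPDFReal ξ v t) := by
  unfold gaussianPDFReal
  fun_prop

lemma gauss_integrable_H (v : ℝ≥0) (t : ℝ) (H : Measure ℝ) [IsFiniteMeasure H] :
    Integrable (fun ξ => gaussianPDFReal ξ v t) H := by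
  refine Integrable.mono' (integrable_const ((√(2 * π * v))⁻¹))
    ((gauss_cont' v t).aestronglyMeasurable) ?_
  filter_upwards with ξ
  rw [Real.norm_eq_abs, abs_of_nonneg (gaussianPDFReal_nonneg _ _ _)]
  exact gauss_le ξ t v

lemma integral_id_mul_gauss (m : ℝ) (v : ℝ≥0) (hv : v ≠ 0) :
    ∫ θ, θ * gaussianPDFReal m v θ = m := by
  have hv' : (0:ℝ) < v := by positivity
  have hint0 : Integrable (fun y => y * gaussianPDFReal 0 v y) := by
    have h := (integrable_mul_exp_neg_mul_sq (b := 1/(2*(v:ℝ))) (by positivity)).const_mul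
      ((√(2 * π * (v:ℝ)))⁻¹)
    have heq : (fun y : ℝ => y * gaussianPDFReal 0 v y)
        = fun y => (√(2 * π * (v:ℝ)))⁻¹ * (y * rexp (-(1/(2*(v:ℝ))) * y^2)) := by
      funext y
      unfold gaussianPDFReal
      ring_nf
    rw [heq]
    exact h
  have hodd : ∫ y, y * gaussianPDFReal 0 v y = 0 := by
    have heq : ∀ y : ℝ, (-y) * gaussianPDFReal 0 v (-y) = -(y * gaussianPDFReal 0 v y) := by
      intro y
      unfold gaussianPDFReal
      ring_nf
    have h := MeasureTheory.integral_neg_eq_self (fun y => y * gaussianPDFReal 0 v y)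
      (volume : Measure ℝ)
    simp only [heq] at h
    rw [integral_neg] at h
    linarith
  calc ∫ θ, θ * gaussianPDFReal m v θ
      = ∫ y, (y + m) * gaussianPDFReal m v (y + m) :=
        (MeasureTheory.integral_add_right_eq_self (fun θ => θ * gaussianPDFReal m v θ) m).symm
    _ = ∫ y, (y * gaussianPDFReal 0 v y + m * gaussianPDFReal 0 v y) := by
        congr 1 with y
        rw [gaussianPDFReal_add, sub_self]
        ring
    _ = 0 + m * 1 := by
        rw [integral_add hint0 ((integrable_gaussianPDFReal 0 v).const_mul m),
          integral_const_mul, integral_gaussianPDFReal_eq_one 0 hv, hodd]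
    _ = m := by ring

lemma gauss_prod (c x θ ξ : ℝ) (hc : 0 < c) :
    gaussianPDFReal x 1 θ * gaussianPDFReal ξ ((c^2).toNNReal) θ
      = gaussianPDFReal ξ ((c^2+1).toNNReal) x
        * gaussianPDFReal ((c^2/(c^2+1))*x + (1-(c^2/(c^2+1)))*ξ)
            ((c^2/(c^2+1)).toNNReal) θ := by
  have hs : (0:ℝ) < c^2 := by positivity
  have hs1 : (0:ℝ) < c^2 + 1 := by positivity
  have hsa : (0:ℝ) < c^2/(c^2+1) := by positivity
  unfold gaussianPDFReal
  rw [Real.coe_toNNReal _ hs.le, Real.coe_toNNReal _ hs1.le, Real.coe_toNNReal _ hsa.le]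
  push_cast
  rw [mul_mul_mul_comm, mul_mul_mul_comm ((√(2 * π * (c^2+1)))⁻¹)]
  congr 1
  · rw [← mul_inv, ← mul_inv, ← Real.sqrt_mul (by positivity), ← Real.sqrt_mul (by positivity)]
    congr 1
    field_simp
  · rw [← Real.exp_add, ← Real.exp_add]
    congr 1
    field_simp
    ring

/-- If `X | θ ~ N(θ,1)`, `θ | ξ ~ N(ξ,c²)`, `ξ ~ H`, then the posterior mean of `θ` given
`X = x` equals `α x + (1-α) E[ξ | X = x]`, where `α = c²/(c²+1)`.  Here the prior density of
`θ` is `g(θ) = ∫ φ_c(θ-ξ) dH(ξ)`, the marginal density of `X` is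
`f(x) = ∫ φ_{√(c²+1)}(x-ξ) dH(ξ)`, the posterior mean of `θ` given `X = x` is
`(∫ θ φ(x-θ) g(θ) dθ)/f(x)` and the posterior mean of `ξ` given `X = x` is
`(∫ ξ φ_{√(c²+1)}(x-ξ) dH(ξ))/f(x)`. -/
theorem posterior_mean_decomposition
    (c : ℝ) (hc : 0 < c) (H : Measure ℝ) [IsProbabilityMeasure H]
    (α : ℝ) (hα : α = c ^ 2 / (c ^ 2 + 1))
    (g f : ℝ → ℝ)
    (hg : ∀ θ, g θ = ∫ ξ, gaussianPDFReal ξ ((c ^ 2).toNNReal) θ ∂H)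
    (hf : ∀ x, f x = ∫ ξ, gaussianPDFReal ξ ((c ^ 2 + 1).toNNReal) x ∂H)
    (x : ℝ) (hfx : f x ≠ 0)
    (h1 : Integrable (fun θ => θ * (gaussianPDFReal θ 1 x * g θ)))
    (h2 : Integrable (fun ξ => ξ * gaussianPDFReal ξ ((c ^ 2 + 1).toNNReal) x) H) :
    (∫ θ, θ * (gaussianPDFReal θ 1 x * g θ)) / f x
      = α * x + (1 - α) *
          ((∫ ξ, ξ * gaussianPDFReal ξ ((c ^ 2 + 1).toNNReal) x ∂H) / f x) := by
  subst hα
  set vc : ℝ≥0 := (c^2).toNNReal with hvc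
  set vs : ℝ≥0 := (c^2+1).toNNReal with hvs
  set vα : ℝ≥0 := (c^2/(c^2+1)).toNNReal with hvαdef
  set a : ℝ := c^2/(c^2+1) with ha
  have hapos : (0:ℝ) < a := by rw [ha]; positivity
  have hvα : vα ≠ 0 := by
    rw [hvαdef, Ne, Real.toNNReal_eq_zero]
    push_neg
    exact hapos
  -- Step 1: numerator as a double integral
  have step1 : (∫ θ, θ * (gaussianPDFReal θ 1 x * g θ))
      = ∫ θ, ∫ ξ, θ * (gaussianPDFReal x 1 θ * gaussianPDFReal ξ vc θ) ∂H := by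
    refine integral_congr_ae (Filter.Eventually.of_forall fun θ => ?_)
    dsimp only
    rw [hg θ, gauss_symm θ x,
      show θ * (gaussianPDFReal x 1 θ * ∫ ξ, gaussianPDFReal ξ vc θ ∂H)
        = (θ * gaussianPDFReal x 1 θ) * ∫ ξ, gaussianPDFReal ξ vc θ ∂H from by ring,
      ← integral_const_mul]
    refine integral_congr_ae (Filter.Eventually.of_forall fun ξ => ?_)
    ring
  -- Step 2: integrability on the product space
  have hmeas : AEStronglyMeasurable
      (Function.uncurry fun θ ξ => θ * (gaussianPDFReal x 1 θ * gaussianPDFReal ξ vc θ))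
      ((volume : Measure ℝ).prod H) := by
    apply Continuous.aestronglyMeasurable
    show Continuous fun p : ℝ × ℝ => p.1 * (gaussianPDFReal x 1 p.1 * gaussianPDFReal p.2 vc p.1)
    unfold gaussianPDFReal
    fun_prop
  have hF : Integrable
      (Function.uncurry fun θ ξ => θ * (gaussianPDFReal x 1 θ * gaussianPDFReal ξ vc θ))
      ((volume : Measure ℝ).prod H) := by
    rw [integrable_prod_iff hmeas]
    constructor
    · refine Filter.Eventually.of_forall fun θ => ?_
      have := (gauss_integrable_H vc θ H).const_mul (θ * gaussianPDFReal x 1 θ)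
      refine this.congr (Filter.Eventually.of_forall fun ξ => ?_)
      simp only [Function.uncurry]
      ring
    · refine h1.abs.congr (Filter.Eventually.of_forall fun θ => ?_)
      have hgnn : (0:ℝ) ≤ ∫ ξ, gaussianPDFReal ξ vc θ ∂H :=
        integral_nonneg fun _ => gaussianPDFReal_nonneg _ _ _
      have hφnn : (0:ℝ) ≤ gaussianPDFReal x 1 θ := gaussianPDFReal_nonneg _ _ _
      calc |θ * (gaussianPDFReal θ 1 x * g θ)|
          = (|θ| * gaussianPDFReal x 1 θ) * ∫ ξ, gaussianPDFReal ξ vc θ ∂H := by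
            rw [hg θ, gauss_symm θ x, abs_mul, abs_mul,
              abs_of_nonneg hφnn, abs_of_nonneg hgnn]
            ring
        _ = ∫ ξ, (|θ| * gaussianPDFReal x 1 θ) * gaussianPDFReal ξ vc θ ∂H := by
            rw [← integral_const_mul]
        _ = ∫ ξ, ‖θ * (gaussianPDFReal x 1 θ * gaussianPDFReal ξ vc θ)‖ ∂H := by
            refine integral_congr_ae (Filter.Eventually.of_forall fun ξ => ?_)
            dsimp only
            rw [Real.norm_eq_abs, abs_mul, abs_mul, abs_of_nonneg hφnn,
              abs_of_nonneg (gaussianPDFReal_nonneg _ _ _)]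
            ring
  -- Step 3: compute the inner integral after swapping
  have step3 : ∀ ξ : ℝ, (∫ θ, θ * (gaussianPDFReal x 1 θ * gaussianPDFReal ξ vc θ))
      = gaussianPDFReal ξ vs x * (a * x + (1 - a) * ξ) := by
    intro ξ
    have hpt : ∀ θ : ℝ, θ * (gaussianPDFReal x 1 θ * gaussianPDFReal ξ vc θ)
        = gaussianPDFReal ξ vs x * (θ * gaussianPDFReal (a * x + (1 - a) * ξ) vα θ) := by
      intro θ
      rw [hvc, gauss_prod c x θ ξ hc, ← ha, ← hvs, ← hvαdef]
      ring
    simp only [hpt]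
    rw [integral_const_mul, integral_id_mul_gauss _ _ hvα]
  -- Step 4: put it together
  have key : (∫ θ, θ * (gaussianPDFReal θ 1 x * g θ))
      = a * x * f x + (1 - a) * ∫ ξ, ξ * gaussianPDFReal ξ vs x ∂H := by
    rw [step1, integral_integral_swap hF]
    have : (∫ ξ, ∫ θ, θ * (gaussianPDFReal x 1 θ * gaussianPDFReal ξ vc θ) ∂volume ∂H)
        = ∫ ξ, (a * x * gaussianPDFReal ξ vs x + (1 - a) * (ξ * gaussianPDFReal ξ vs x)) ∂H := by
      refine integral_congr_ae (Filter.Eventually.of_forall fun ξ => ?_)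
      dsimp only
      rw [step3 ξ]
      ring
    rw [this, integral_add ((gauss_integrable_H vs x H).const_mul _) (h2.const_mul _),
      integral_const_mul, integral_const_mul, hf x]
  rw [key]
  field_simp
end

section
/- KL projection onto the mixture class is unique: if F_L = {f_H : H ∈ P([-L,L])} with f_H the density of H ⋆ N(0,σ²), and f₁, f₂ ∈ F_L both minimize KL(p ‖ ·) over F_L for a density p > 0 everywhere with finite minimum, then f₁ = f₂ everywhere. -/
open MeasureTheory ProbabilityTheory Real

open scoped NNReal ENNReal

lemma gauss_bound (v : ℝ≥0) (μ x : ℝ) :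
    gaussianPDFReal μ v x ≤ (Real.sqrt (2 * π * v))⁻¹ := by
  unfold gaussianPDFReal
  have h1 : Real.exp (-(x - μ) ^ 2 / (2 * (v:ℝ))) ≤ 1 := by
    apply Real.exp_le_one_iff.mpr
    exact div_nonpos_of_nonpos_of_nonneg (neg_nonpos.mpr (sq_nonneg _)) (by positivity)
  calc (Real.sqrt (2 * π * v))⁻¹ * Real.exp (-(x - μ) ^ 2 / (2 * (v:ℝ)))
      ≤ (Real.sqrt (2 * π * v))⁻¹ * 1 := by
        apply mul_le_mul_of_nonneg_left h1 (by positivity)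
    _ = _ := by ring

lemma gauss_cont_left (v : ℝ≥0) (x : ℝ) : Continuous fun ξ => gaussianPDFReal ξ v x := by
  unfold gaussianPDFReal; fun_prop

lemma gauss_cont_right (v : ℝ≥0) (ξ : ℝ) : Continuous fun x => gaussianPDFReal ξ v x := by
  unfold gaussianPDFReal; fun_prop

lemma gauss_integrable (v : ℝ≥0) (x : ℝ) (H : Measure ℝ) [IsFiniteMeasure H] :
    Integrable (fun ξ => gaussianPDFReal ξ v x) H := by
  refine Integrable.mono' (integrable_const ((Real.sqrt (2 * π * v))⁻¹)) ?_ ?_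
  · exact (gauss_cont_left v x).aestronglyMeasurable
  · exact ae_of_all _ fun ξ => by
      rw [Real.norm_eq_abs, abs_of_nonneg (gaussianPDFReal_nonneg _ _ _)]
      exact gauss_bound v ξ x

/-- Density of the Gaussian location mixture `H ⋆ N(0,σ²)`. -/
noncomputable def mixDensity (σ : ℝ) (H : Measure ℝ) : ℝ → ℝ :=
  fun x => ∫ ξ, gaussianPDFReal ξ ((σ ^ 2).toNNReal) x ∂H

lemma mixDensity_pos (σ : ℝ) (hσ : 0 < σ) (H : Measure ℝ) [IsProbabilityMeasure H] (x : ℝ) :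
    0 < mixDensity σ H x := by
  have hv : ((σ ^ 2).toNNReal) ≠ 0 := by
    simp only [ne_eq, Real.toNNReal_eq_zero, not_le]
    positivity
  rw [mixDensity]
  rw [integral_pos_iff_support_of_nonneg (fun ξ => gaussianPDFReal_nonneg _ _ _)
    (gauss_integrable _ _ _)]
  have : (Function.support fun ξ => gaussianPDFReal ξ ((σ ^ 2).toNNReal) x) = Set.univ := by
    ext ξ; simp [Function.mem_support, ne_of_gt (gaussianPDFReal_pos ξ _ x hv)]
  rw [this]
  simp

lemma mixDensity_cont (σ : ℝ) (H : Measure ℝ) [IsFiniteMeasure H] :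
    Continuous (mixDensity σ H) := by
  set v := (σ ^ 2).toNNReal
  apply continuous_of_dominated (bound := fun _ => (Real.sqrt (2 * π * v))⁻¹)
  · exact fun x => (gauss_cont_left v x).aestronglyMeasurable
  · exact fun x => ae_of_all _ fun ξ => by
      rw [Real.norm_eq_abs, abs_of_nonneg (gaussianPDFReal_nonneg _ _ _)]
      exact gauss_bound v ξ x
  · exact integrable_const _
  · exact ae_of_all _ fun ξ => gauss_cont_right v ξ

lemma mixDensity_midpoint (σ : ℝ) (H₁ H₂ : Measure ℝ)
    [IsProbabilityMeasure H₁] [IsProbabilityMeasure H₂] (x : ℝ) :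
    mixDensity σ ((2 : ℝ≥0∞)⁻¹ • (H₁ + H₂)) x = (mixDensity σ H₁ x + mixDensity σ H₂ x) / 2 := by
  rw [mixDensity, integral_smul_measure, integral_add_measure (gauss_integrable _ _ _)
    (gauss_integrable _ _ _)]
  simp only [mixDensity, ENNReal.toReal_inv, ENNReal.toReal_ofNat, smul_eq_mul]
  ring

lemma midpoint_log_le {a b : ℝ} (ha : 0 < a) (hb : 0 < b) :
    (Real.log a + Real.log b) / 2 ≤ Real.log ((a + b) / 2) := by
  have h := strictConcaveOn_log_Ioi.concaveOn.2 (Set.mem_Ioi.mpr ha) (Set.mem_Ioi.mpr hb)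
    (by norm_num : (0:ℝ) ≤ 1/2) (by norm_num : (0:ℝ) ≤ 1/2) (by norm_num)
  have e : (1/2 : ℝ) • a + (1/2 : ℝ) • b = (a + b) / 2 := by simp [smul_eq_mul]; ring
  rw [e] at h
  simp only [smul_eq_mul] at h
  linarith

lemma midpoint_log_lt {a b : ℝ} (ha : 0 < a) (hb : 0 < b) (hne : a ≠ b) :
    (Real.log a + Real.log b) / 2 < Real.log ((a + b) / 2) := by
  have h := strictConcaveOn_log_Ioi.2 (Set.mem_Ioi.mpr ha) (Set.mem_Ioi.mpr hb) hne
    (by norm_num : (0:ℝ) < 1/2) (by norm_num : (0:ℝ) < 1/2) (by norm_num)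
  have e : (1/2 : ℝ) • a + (1/2 : ℝ) • b = (a + b) / 2 := by simp [smul_eq_mul]; ring
  rw [e] at h
  simp only [smul_eq_mul] at h
  linarith

lemma kl_conv_le {P a b : ℝ} (hP : 0 < P) (ha : 0 < a) (hb : 0 < b) :
    P * Real.log (P / ((a + b) / 2)) ≤ (P * Real.log (P / a) + P * Real.log (P / b)) / 2 := by
  rw [Real.log_div hP.ne' (by positivity), Real.log_div hP.ne' ha.ne',
    Real.log_div hP.ne' hb.ne']
  nlinarith [mul_le_mul_of_nonneg_left (midpoint_log_le ha hb) hP.le]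

lemma kl_conv_lt {P a b : ℝ} (hP : 0 < P) (ha : 0 < a) (hb : 0 < b) (hne : a ≠ b) :
    P * Real.log (P / ((a + b) / 2)) < (P * Real.log (P / a) + P * Real.log (P / b)) / 2 := by
  rw [Real.log_div hP.ne' (by positivity), Real.log_div hP.ne' ha.ne',
    Real.log_div hP.ne' hb.ne']
  nlinarith [mul_lt_mul_of_pos_left (midpoint_log_lt ha hb hne) hP]

/-- Membership in the class `F_L = {f_H : H ∈ P([-L,L])}`. -/
def InMixtureClass (σ L : ℝ) (f : ℝ → ℝ) : Prop :=
  ∃ H : Measure ℝ, IsProbabilityMeasure H ∧ H (Set.Icc (-L) L)ᶜ = 0 ∧ f = mixDensity σ H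

/-- Kullback–Leibler divergence `KL(p ‖ f) = ∫ p log(p/f)`. -/
noncomputable def klDiv' (p f : ℝ → ℝ) : ℝ := ∫ x, p x * Real.log (p x / f x)

/-- KL projection onto the mixture class is unique: if `f₁, f₂ ∈ F_L` both minimize
`KL(p ‖ ·)` over `F_L` for an everywhere-positive density `p`, with finite KL values on the
class, then `f₁ = f₂` everywhere. -/
theorem kl_projection_unique
    (σ L : ℝ) (hσ : 0 < σ) (hL : 0 < L)
    (p : ℝ → ℝ) (hpm : Measurable p) (hp : ∀ x, 0 < p x) (hpd : ∫ x, p x = 1)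
    (f₁ f₂ : ℝ → ℝ)
    (h₁ : InMixtureClass σ L f₁) (h₂ : InMixtureClass σ L f₂)
    (hfin : ∀ g, InMixtureClass σ L g →
      Integrable (fun x => p x * Real.log (p x / g x)))
    (hmin₁ : ∀ g, InMixtureClass σ L g → klDiv' p f₁ ≤ klDiv' p g)
    (hmin₂ : ∀ g, InMixtureClass σ L g → klDiv' p f₂ ≤ klDiv' p g) :
    f₁ = f₂ := by
  obtain ⟨H₁, h₁p, h₁s, hf₁⟩ := h₁
  obtain ⟨H₂, h₂p, h₂s, hf₂⟩ := h₂
  haveI := h₁p; haveI := h₂p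
  set H : Measure ℝ := (2 : ℝ≥0∞)⁻¹ • (H₁ + H₂) with hH
  haveI hHp : IsProbabilityMeasure H := by
    constructor
    rw [hH, Measure.smul_apply, Measure.add_apply, measure_univ, measure_univ, smul_eq_mul]
    rw [one_add_one_eq_two, ENNReal.inv_mul_cancel two_ne_zero ENNReal.ofNat_ne_top]
  set g : ℝ → ℝ := mixDensity σ H with hgdef
  have hg : InMixtureClass σ L g := by
    refine ⟨H, hHp, ?_, rfl⟩
    rw [hH, Measure.smul_apply, Measure.add_apply, h₁s, h₂s]
    simp
  have hgmid : ∀ x, g x = (f₁ x + f₂ x) / 2 := fun x => by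
    rw [hgdef, hH, hf₁, hf₂]; exact mixDensity_midpoint σ H₁ H₂ x
  have hf₁pos : ∀ x, 0 < f₁ x := fun x => hf₁ ▸ mixDensity_pos σ hσ H₁ x
  have hf₂pos : ∀ x, 0 < f₂ x := fun x => hf₂ ▸ mixDensity_pos σ hσ H₂ x
  have hKL12 : klDiv' p f₁ = klDiv' p f₂ := le_antisymm (hmin₁ f₂ ⟨H₂, h₂p, h₂s, hf₂⟩)
    (hmin₂ f₁ ⟨H₁, h₁p, h₁s, hf₁⟩)
  set φ : ℝ → ℝ := fun x =>
    (p x * Real.log (p x / f₁ x) + p x * Real.log (p x / f₂ x)) / 2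
      - p x * Real.log (p x / g x) with hφdef
  have hi₁ := hfin f₁ ⟨H₁, h₁p, h₁s, hf₁⟩
  have hi₂ := hfin f₂ ⟨H₂, h₂p, h₂s, hf₂⟩
  have hig := hfin g hg
  have hφint : Integrable φ := ((hi₁.add hi₂).div_const 2).sub hig
  have hφnonneg : ∀ x, 0 ≤ φ x := fun x => by
    have := kl_conv_le (hp x) (hf₁pos x) (hf₂pos x)
    rw [hφdef, ← hgmid x] at *
    dsimp only
    rw [hgmid x]
    linarith [kl_conv_le (hp x) (hf₁pos x) (hf₂pos x)]
  have hφeq : ∫ x, φ x = (klDiv' p f₁ + klDiv' p f₂) / 2 - klDiv' p g := by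
    have e1 : Integrable (fun x =>
        (p x * Real.log (p x / f₁ x) + p x * Real.log (p x / f₂ x)) / 2) volume :=
      (hi₁.add hi₂).div_const 2
    have e2 : Integrable (fun x =>
        p x * Real.log (p x / f₁ x) + p x * Real.log (p x / f₂ x)) volume := hi₁.add hi₂
    rw [hφdef]
    rw [integral_sub e1 hig, integral_div, integral_add hi₁ hi₂]
    rfl
  have hle : ∫ x, φ x ≤ 0 := by
    rw [hφeq]
    have := hmin₁ g hg
    linarith [hKL12]
  have hzero : ∫ x, φ x = 0 := le_antisymm hle (integral_nonneg hφnonneg)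
  have hae : φ =ᵐ[volume] 0 := by
    rw [← integral_eq_zero_iff_of_nonneg hφnonneg hφint]
    exact hzero
  have haeq : f₁ =ᵐ[volume] f₂ := by
    filter_upwards [hae] with x hx
    by_contra hne
    have hlt := kl_conv_lt (hp x) (hf₁pos x) (hf₂pos x) hne
    have : 0 < φ x := by
      rw [hφdef]
      dsimp only
      rw [hgmid x]
      linarith
    rw [hx] at this
    exact lt_irrefl _ this
  rw [hf₁, hf₂] at haeq ⊢
  exact ((mixDensity_cont σ H₁).ae_eq_iff_eq volume (mixDensity_cont σ H₂)).mp haeq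
end

section
/- Existence of the KL projection: under a sub-exponential tail condition on p, the map H ↦ KL(p ‖ f_H) attains its minimum over P([-L,L]), where f_H is the density of H ⋆ N(0,σ²). -/
open MeasureTheory ProbabilityTheory Real Set Filter Topology
open scoped ENNReal NNReal

namespace KLProj

/-- the maximal value of the gaussian density -/
noncomputable def ub (σ : ℝ) : ℝ := (Real.sqrt (2 * π * σ ^ 2))⁻¹

/-- lower bound for the mixture density at `x` -/
noncomputable def lb (σ L x : ℝ) : ℝ := ub σ * rexp (-(|x| + L) ^ 2 / (2 * σ ^ 2))

lemma ub_pos {σ : ℝ} (hσ : 0 < σ) : 0 < ub σ := by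
  have : 0 < 2 * π * σ ^ 2 := by positivity
  exact inv_pos.2 (Real.sqrt_pos.2 this)

lemma lb_pos {σ L x : ℝ} (hσ : 0 < σ) : 0 < lb σ L x :=
  mul_pos (ub_pos hσ) (Real.exp_pos _)

lemma gauss_eq (σ ξ x : ℝ) :
    gaussianPDFReal ξ ((σ ^ 2).toNNReal) x = ub σ * rexp (-(x - ξ) ^ 2 / (2 * σ ^ 2)) := by
  rw [gaussianPDFReal, ub, Real.coe_toNNReal _ (sq_nonneg σ)]

lemma gauss_nonneg (σ ξ x : ℝ) (hσ : 0 < σ) : 0 ≤ gaussianPDFReal ξ ((σ ^ 2).toNNReal) x := by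
  rw [gauss_eq]; exact le_of_lt (mul_pos (ub_pos hσ) (Real.exp_pos _))

lemma gauss_le_ub (σ ξ x : ℝ) (hσ : 0 < σ) :
    gaussianPDFReal ξ ((σ ^ 2).toNNReal) x ≤ ub σ := by
  rw [gauss_eq]
  have h1 : rexp (-(x - ξ) ^ 2 / (2 * σ ^ 2)) ≤ 1 := by
    rw [Real.exp_le_one_iff]
    have h : 0 < 2 * σ ^ 2 := by positivity
    exact div_nonpos_of_nonpos_of_nonneg (neg_nonpos.2 (sq_nonneg _)) (le_of_lt h)
  calc ub σ * rexp (-(x - ξ) ^ 2 / (2 * σ ^ 2)) ≤ ub σ * 1 :=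
        mul_le_mul_of_nonneg_left h1 (le_of_lt (ub_pos hσ))
    _ = ub σ := mul_one _

lemma gauss_ge_lb {σ L : ℝ} (hσ : 0 < σ) {ξ : ℝ} (hξ : ξ ∈ Icc (-L) L) (x : ℝ) :
    lb σ L x ≤ gaussianPDFReal ξ ((σ ^ 2).toNNReal) x := by
  rw [gauss_eq, lb]
  have h2 : (x - ξ) ^ 2 ≤ (|x| + L) ^ 2 := by
    have h3 : |x - ξ| ≤ |x| + L := by
      refine (abs_sub _ _).trans ?_
      have : |ξ| ≤ L := abs_le.2 ⟨hξ.1, hξ.2⟩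
      linarith
    calc (x - ξ) ^ 2 = |x - ξ| ^ 2 := (sq_abs _).symm
      _ ≤ (|x| + L) ^ 2 := by nlinarith [abs_nonneg (x - ξ)]
  have hc : (0:ℝ) < 2 * σ ^ 2 := by positivity
  refine mul_le_mul_of_nonneg_left ?_ (le_of_lt (ub_pos hσ))
  exact Real.exp_le_exp.2 ((div_le_div_iff_of_pos_right hc).2 (neg_le_neg h2))

lemma cont_gauss (σ x : ℝ) : Continuous fun ξ => gaussianPDFReal ξ ((σ ^ 2).toNNReal) x := by
  have : (fun ξ => gaussianPDFReal ξ ((σ ^ 2).toNNReal) x)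
      = fun ξ => ub σ * rexp (-(x - ξ) ^ 2 / (2 * σ ^ 2)) := funext fun ξ => gauss_eq σ ξ x
  rw [this]
  exact continuous_const.mul (Real.continuous_exp.comp
    ((((continuous_const.sub continuous_id).pow 2).neg).div_const _))

lemma contDiff_gauss (σ x : ℝ) : ContDiff ℝ 1 fun ξ => gaussianPDFReal ξ ((σ ^ 2).toNNReal) x := by
  have : (fun ξ => gaussianPDFReal ξ ((σ ^ 2).toNNReal) x)
      = fun ξ => ub σ * rexp (-(x - ξ) ^ 2 / (2 * σ ^ 2)) := funext fun ξ => gauss_eq σ ξ x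
  rw [this]
  exact contDiff_const.mul ((Real.contDiff_exp.of_le le_top).comp
    ((((contDiff_const.sub contDiff_id).pow 2).neg).div_const _))

lemma cont_gauss_x (σ ξ : ℝ) : Continuous fun x => gaussianPDFReal ξ ((σ ^ 2).toNNReal) x := by
  have : (fun x => gaussianPDFReal ξ ((σ ^ 2).toNNReal) x)
      = fun x => ub σ * rexp (-(x - ξ) ^ 2 / (2 * σ ^ 2)) := funext fun x => gauss_eq σ ξ x
  rw [this]
  exact continuous_const.mul (Real.continuous_exp.comp
    ((((continuous_id.sub continuous_const).pow 2).neg).div_const _))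

lemma integrable_gauss {σ : ℝ} (hσ : 0 < σ) (H : Measure ℝ) [IsFiniteMeasure H] (x : ℝ) :
    Integrable (fun ξ => gaussianPDFReal ξ ((σ ^ 2).toNNReal) x) H := by
  refine Integrable.mono' (integrable_const (ub σ)) (cont_gauss σ x).aestronglyMeasurable
    (ae_of_all _ fun ξ => ?_)
  rw [Real.norm_eq_abs, abs_of_nonneg (gauss_nonneg σ ξ x hσ)]
  exact gauss_le_ub σ ξ x hσ

lemma ae_mem_Icc {L : ℝ} {H : Measure ℝ} (hsupp : H (Icc (-L) L)ᶜ = 0) :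
    ∀ᵐ ξ ∂H, ξ ∈ Icc (-L) L := by
  rw [ae_iff]
  have : {ξ | ¬ ξ ∈ Icc (-L) L} = (Icc (-L) L)ᶜ := rfl
  rw [this, hsupp]

lemma mix_le_ub {σ : ℝ} (hσ : 0 < σ) (H : Measure ℝ) [IsProbabilityMeasure H] (x : ℝ) :
    mixDensity σ H x ≤ ub σ := by
  have := integral_mono (integrable_gauss hσ H x) (integrable_const (ub σ))
    (fun ξ => gauss_le_ub σ ξ x hσ)
  simpa [mixDensity] using this

lemma lb_le_mix {σ L : ℝ} (hσ : 0 < σ) (H : Measure ℝ) [IsProbabilityMeasure H]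
    (hsupp : H (Icc (-L) L)ᶜ = 0) (x : ℝ) : lb σ L x ≤ mixDensity σ H x := by
  have := integral_mono_ae (integrable_const (lb σ L x)) (integrable_gauss hσ H x)
    ((ae_mem_Icc hsupp).mono fun ξ hξ => gauss_ge_lb hσ hξ x)
  simpa [mixDensity] using this

lemma mix_pos {σ L : ℝ} (hσ : 0 < σ) (H : Measure ℝ) [IsProbabilityMeasure H]
    (hsupp : H (Icc (-L) L)ᶜ = 0) (x : ℝ) : 0 < mixDensity σ H x :=
  lt_of_lt_of_le (lb_pos hσ) (lb_le_mix hσ H hsupp x)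

lemma mix_continuous {σ : ℝ} (hσ : 0 < σ) (H : Measure ℝ) [IsFiniteMeasure H] :
    Continuous (mixDensity σ H) := by
  rw [continuous_iff_continuousAt]
  intro x₀
  refine continuousAt_of_dominated (F := fun x ξ => gaussianPDFReal ξ ((σ ^ 2).toNNReal) x)
    (bound := fun _ => ub σ) (Eventually.of_forall fun x => (cont_gauss σ x).aestronglyMeasurable)
    (Eventually.of_forall fun x => ae_of_all _ fun ξ => ?_) (integrable_const _)
    (ae_of_all _ fun ξ => (cont_gauss_x σ ξ).continuousAt)
  rw [Real.norm_eq_abs, abs_of_nonneg (gauss_nonneg σ ξ x hσ)]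
  exact gauss_le_ub σ ξ x hσ

/-- constant for the envelope `|log f_H x| ≤ Cc σ L * (1 + x²)` -/
noncomputable def Cc (σ L : ℝ) : ℝ := 2 * |Real.log (ub σ)| + (1 + L ^ 2) / σ ^ 2

lemma log_mix_bound {σ L : ℝ} (hσ : 0 < σ) (H : Measure ℝ) [IsProbabilityMeasure H]
    (hsupp : H (Icc (-L) L)ᶜ = 0) (x : ℝ) :
    |Real.log (mixDensity σ H x)| ≤ Cc σ L * (1 + x ^ 2) := by
  set f := mixDensity σ H x with hf
  have hfpos : 0 < f := mix_pos hσ H hsupp x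
  have h1 : Real.log f ≤ Real.log (ub σ) :=
    Real.log_le_log hfpos (mix_le_ub hσ H x)
  have h2 : Real.log (ub σ) + (-(|x| + L) ^ 2 / (2 * σ ^ 2)) ≤ Real.log f := by
    have := Real.log_le_log (lb_pos hσ (L := L) (x := x)) (lb_le_mix hσ H hsupp x)
    rwa [lb, Real.log_mul (ne_of_gt (ub_pos hσ)) (Real.exp_ne_zero _), Real.log_exp] at this
  set A := |Real.log (ub σ)| with hA
  have hA0 : 0 ≤ A := abs_nonneg _
  have hBle : (|x| + L) ^ 2 / (2 * σ ^ 2) ≤ (1 + L ^ 2) / σ ^ 2 * (1 + x ^ 2) := by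
    have hnum : (|x| + L) ^ 2 ≤ 2 * x ^ 2 + 2 * L ^ 2 := by
      nlinarith [sq_abs x, sq_nonneg (|x| - L)]
    have hs : (0:ℝ) < σ ^ 2 := by positivity
    rw [div_le_iff₀ (show (0:ℝ) < 2 * σ ^ 2 by positivity)]
    have heq : (1 + L ^ 2) / σ ^ 2 * (1 + x ^ 2) * (2 * σ ^ 2)
        = 2 * (1 + L ^ 2) * (1 + x ^ 2) := by field_simp
    rw [heq]
    nlinarith [sq_nonneg (x * L), sq_nonneg x, sq_nonneg L]
  have hub1 : Real.log (ub σ) ≤ A := le_abs_self _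
  have hub2 : -A ≤ Real.log (ub σ) := neg_abs_le _
  have hD0 : (0:ℝ) ≤ (1 + L ^ 2) / σ ^ 2 * (1 + x ^ 2) := by positivity
  have hB0 : (0:ℝ) ≤ (|x| + L) ^ 2 / (2 * σ ^ 2) := by positivity
  rw [abs_le]
  constructor
  · have hnd : -(|x| + L) ^ 2 / (2 * σ ^ 2) = -((|x| + L) ^ 2 / (2 * σ ^ 2)) := neg_div _ _
    have : -(A + (1 + L ^ 2) / σ ^ 2 * (1 + x ^ 2)) ≤ Real.log f := by
      rw [hnd] at h2; linarith
    refine le_trans ?_ this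
    rw [Cc]
    have hx2 : (0:ℝ) ≤ x ^ 2 := sq_nonneg x
    nlinarith
  · refine h1.trans (hub1.trans ?_)
    rw [Cc]
    have hx2 : (0:ℝ) ≤ x ^ 2 := sq_nonneg x
    have hD0' : (0:ℝ) ≤ (1 + L ^ 2) / σ ^ 2 := by positivity
    nlinarith

lemma Cc_nonneg {σ L : ℝ} (hσ : 0 < σ) : 0 ≤ Cc σ L := by
  rw [Cc]; positivity

lemma plogmix_bound {σ L : ℝ} (hσ : 0 < σ) {p : ℝ → ℝ} (hp : ∀ x, 0 ≤ p x)
    (H : Measure ℝ) [IsProbabilityMeasure H] (hsupp : H (Icc (-L) L)ᶜ = 0) (x : ℝ) :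
    ‖p x * Real.log (mixDensity σ H x)‖ ≤ Cc σ L * ((1 + x ^ 2) * p x) := by
  rw [Real.norm_eq_abs, abs_mul, abs_of_nonneg (hp x)]
  calc p x * |Real.log (mixDensity σ H x)| ≤ p x * (Cc σ L * (1 + x ^ 2)) :=
        mul_le_mul_of_nonneg_left (log_mix_bound hσ H hsupp x) (hp x)
    _ = Cc σ L * ((1 + x ^ 2) * p x) := by ring

lemma integrable_plogmix {σ L : ℝ} (hσ : 0 < σ) {p : ℝ → ℝ} (hpm : Measurable p)
    (hp : ∀ x, 0 ≤ p x) (hmom : Integrable (fun x => (1 + x ^ 2) * p x))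
    (H : Measure ℝ) [IsProbabilityMeasure H] (hsupp : H (Icc (-L) L)ᶜ = 0) :
    Integrable (fun x => p x * Real.log (mixDensity σ H x)) := by
  refine Integrable.mono' (hmom.const_mul (Cc σ L)) ?_
    (ae_of_all _ fun x => plogmix_bound hσ hp H hsupp x)
  exact (hpm.mul (Real.measurable_log.comp (mix_continuous hσ H).measurable)).aestronglyMeasurable

lemma repr_integral {L : ℝ} (hL : 0 < L) (h : ℝ → ℝ) (hh : ContDiff ℝ 1 h)
    (H : Measure ℝ) [IsProbabilityMeasure H] (hsupp : H (Icc (-L) L)ᶜ = 0) :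
    ∫ ξ, h ξ ∂H = h L - ∫ t in Ioc (-L) L, deriv h t * (H (Iio t)).toReal := by
  have hae : ∀ᵐ ξ ∂H, ξ ∈ Icc (-L) L := ae_mem_Icc hsupp
  have hder_cont : Continuous (deriv h) := hh.continuous_deriv le_rfl
  -- FTC
  have hftc : ∀ ξ ∈ Icc (-L) L,
      h L - h ξ = ∫ t, Set.indicator (Ioc ξ L) (deriv h) t := by
    intro ξ hξ
    have h1 : ∫ t in ξ..L, deriv h t = h L - h ξ :=
      intervalIntegral.integral_deriv_eq_sub (fun t _ => hh.differentiable one_ne_zero t)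
        (hder_cont.intervalIntegrable _ _)
    rw [intervalIntegral.integral_of_le hξ.2] at h1
    rw [integral_indicator measurableSet_Ioc, ← h1]
  -- integrability of h on H
  obtain ⟨C, hC⟩ := isCompact_Icc.exists_bound_of_continuousOn
    (hh.continuous.continuousOn (s := Icc (-L) L))
  have hint_h : Integrable h H := by
    refine Integrable.mono' (integrable_const C) hh.continuous.aestronglyMeasurable
      (hae.mono fun ξ hξ => hC ξ hξ)
  -- the key Fubini identity
  have key : ∫ ξ, (h L - h ξ) ∂H = ∫ t in Ioc (-L) L, deriv h t * (H (Iio t)).toReal := by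
    have e1 : ∫ ξ, (h L - h ξ) ∂H
        = ∫ ξ, (∫ t, Set.indicator (Ioc ξ L) (deriv h) t) ∂H :=
      integral_congr_ae (hae.mono fun ξ hξ => hftc ξ hξ)
    -- measurability of the two-variable function
    have hmeas : Measurable (Function.uncurry fun ξ t => Set.indicator (Ioc ξ L) (deriv h) t) := by
      have hset : MeasurableSet {q : ℝ × ℝ | q.1 < q.2 ∧ q.2 ≤ L} :=
        (measurableSet_lt measurable_fst measurable_snd).inter
          (measurableSet_Iic.preimage measurable_snd)
      have : (Function.uncurry fun ξ t => Set.indicator (Ioc ξ L) (deriv h) t)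
          = Set.indicator {q : ℝ × ℝ | q.1 < q.2 ∧ q.2 ≤ L} (fun q => deriv h q.2) := by
        funext q
        rcases q with ⟨ξ, t⟩
        simp only [Function.uncurry, Set.indicator_apply, Set.mem_Ioc, Set.mem_setOf_eq]
      rw [this]
      exact ((measurable_deriv h).comp measurable_snd).indicator hset
    -- integrability on the product
    obtain ⟨M, hM⟩ := isCompact_Icc.exists_bound_of_continuousOn
      (hder_cont.continuousOn (s := Icc (-L) L))
    have hprod : Integrable (Function.uncurry fun ξ t => Set.indicator (Ioc ξ L) (deriv h) t)
        (H.prod volume) := by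
      rw [integrable_prod_iff hmeas.aestronglyMeasurable]
      constructor
      · refine ae_of_all _ fun ξ => ?_
        simp only [Function.uncurry_apply_pair]
        rw [integrable_indicator_iff measurableSet_Ioc]
        exact hder_cont.integrableOn_Ioc
      · -- the function ξ ↦ ∫ t, ‖·‖ is antitone hence measurable, and bounded a.e.
        simp only [Function.uncurry_apply_pair]
        have hg : ∀ ξ, (∫ t, ‖Set.indicator (Ioc ξ L) (deriv h) t‖)
            = ∫ t in Ioc ξ L, |deriv h t| := by
          intro ξ
          rw [← integral_indicator measurableSet_Ioc]
          congr 1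
          funext t
          rw [norm_indicator_eq_indicator_norm]
          simp [Real.norm_eq_abs]
        have hanti : Antitone fun ξ => ∫ t in Ioc ξ L, |deriv h t| := by
          intro ξ ξ' hle
          refine setIntegral_mono_set hder_cont.abs.integrableOn_Ioc
            (ae_of_all _ fun t => abs_nonneg _) (HasSubset.Subset.eventuallyLE ?_)
          exact Ioc_subset_Ioc_left hle
        refine Integrable.mono' (integrable_const (∫ t in Ioc (-L) L, |deriv h t|))
          ?_ (hae.mono fun ξ hξ => ?_)
        · refine AEStronglyMeasurable.congr ?_ (ae_of_all _ fun ξ => (hg ξ).symm)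
          exact (Antitone.measurable hanti).aestronglyMeasurable
        · rw [hg]
          rw [Real.norm_eq_abs, abs_of_nonneg (integral_nonneg fun t => abs_nonneg _)]
          exact hanti hξ.1
    have e2 := integral_integral_swap hprod
    -- compute the inner integral after swapping
    have e3 : ∀ t : ℝ, (∫ ξ, Set.indicator (Ioc ξ L) (deriv h) t ∂H)
        = Set.indicator (Iic L) (fun t => deriv h t * (H (Iio t)).toReal) t := by
      intro t
      by_cases ht : t ≤ L
      · have : (fun ξ => Set.indicator (Ioc ξ L) (deriv h) t)
            = Set.indicator (Iio t) (fun _ => deriv h t) := by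
          funext ξ
          by_cases hξt : ξ < t
          · rw [Set.indicator_of_mem (by exact ⟨hξt, ht⟩ : t ∈ Ioc ξ L),
              Set.indicator_of_mem (by exact hξt : ξ ∈ Iio t)]
          · rw [Set.indicator_of_notMem (fun hc => hξt hc.1),
              Set.indicator_of_notMem (by exact hξt : ¬ ξ ∈ Iio t)]
        rw [this, integral_indicator_const _ measurableSet_Iio,
          Set.indicator_of_mem (by exact ht : t ∈ Iic L), measureReal_def, smul_eq_mul, mul_comm]
      · have : ∀ ξ : ℝ, Set.indicator (Ioc ξ L) (deriv h) t = 0 := fun ξ =>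
          Set.indicator_of_notMem (fun hc => ht hc.2) _
        simp only [this, integral_zero]
        rw [Set.indicator_of_notMem (by exact ht : ¬ t ∈ Iic L)]
    have e4 : ∀ t : ℝ, Set.indicator (Iic L) (fun t => deriv h t * (H (Iio t)).toReal) t
        = Set.indicator (Ioc (-L) L) (fun t => deriv h t * (H (Iio t)).toReal) t := by
      intro t
      by_cases ht1 : t ≤ L
      · by_cases ht2 : -L < t
        · rw [Set.indicator_of_mem (by exact ht1 : t ∈ Iic L),
            Set.indicator_of_mem (show t ∈ Ioc (-L) L from ⟨ht2, ht1⟩)]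
        · have hIio : H (Iio t) = 0 := by
            refine measure_mono_null ?_ hsupp
            intro y hy
            simp only [Set.mem_compl_iff, Set.mem_Icc, not_and, not_le]
            intro hy2
            exfalso
            push_neg at ht2
            exact absurd (lt_of_lt_of_le hy ht2) (not_lt.2 hy2)
          rw [Set.indicator_of_mem (by exact ht1 : t ∈ Iic L),
            Set.indicator_of_notMem (fun hc => ht2 hc.1), hIio]
          simp
      · rw [Set.indicator_of_notMem (by exact ht1 : ¬ t ∈ Iic L),
          Set.indicator_of_notMem (fun hc => ht1 hc.2)]
    calc ∫ ξ, (h L - h ξ) ∂H = ∫ ξ, (∫ t, Set.indicator (Ioc ξ L) (deriv h) t) ∂H := e1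
      _ = ∫ t, (∫ ξ, Set.indicator (Ioc ξ L) (deriv h) t ∂H) := e2
      _ = ∫ t, Set.indicator (Ioc (-L) L) (fun t => deriv h t * (H (Iio t)).toReal) t := by
          congr 1; funext t; rw [e3 t, e4 t]
      _ = ∫ t in Ioc (-L) L, deriv h t * (H (Iio t)).toReal :=
          integral_indicator measurableSet_Ioc
  have hsub : ∫ ξ, (h L - h ξ) ∂H = h L - ∫ ξ, h ξ ∂H := by
    rw [integral_sub (integrable_const _) hint_h, integral_const]
    simp
  rw [← key, hsub]
  ring

lemma helly {L : ℝ} (hL : 0 < L) (Hs : ℕ → Measure ℝ)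
    (hprob : ∀ n, IsProbabilityMeasure (Hs n)) (hsupp : ∀ n, Hs n (Icc (-L) L)ᶜ = 0) :
    ∃ (H₀ : Measure ℝ) (φ : ℕ → ℕ), IsProbabilityMeasure H₀ ∧ H₀ (Icc (-L) L)ᶜ = 0 ∧
      StrictMono φ ∧ ∀ h : ℝ → ℝ, ContDiff ℝ 1 h →
        Tendsto (fun n => ∫ ξ, h ξ ∂(Hs (φ n))) atTop (𝓝 (∫ ξ, h ξ ∂H₀)) := by
  haveI : ∀ n, IsProbabilityMeasure (Hs n) := hprob
  set Fn : ℕ → ℝ → ℝ := fun n t => (Hs n (Iic t)).toReal with hFn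
  have hFn01 : ∀ n t, Fn n t ∈ Icc (0:ℝ) 1 := by
    intro n t
    constructor
    · exact ENNReal.toReal_nonneg
    · have h1 : Hs n (Iic t) ≤ 1 := prob_le_one
      calc (Hs n (Iic t)).toReal ≤ (1 : ℝ≥0∞).toReal :=
            ENNReal.toReal_mono ENNReal.one_ne_top h1
        _ = 1 := by simp
  have hFnmono : ∀ n, Monotone (Fn n) := fun n s t hst =>
    ENNReal.toReal_mono (measure_ne_top _ _) (measure_mono (Iic_subset_Iic.2 hst))
  have hFnbot : ∀ n t, t < -L → Fn n t = 0 := by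
    intro n t ht
    have : Hs n (Iic t) = 0 := by
      refine measure_mono_null ?_ (hsupp n)
      intro y hy
      simp only [mem_compl_iff, mem_Icc, not_and, not_le]
      intro hy2
      simp only [mem_Iic] at hy
      linarith
    simp [hFn, this]
  have hFntop : ∀ n t, L ≤ t → Fn n t = 1 := by
    intro n t ht
    have hc : Hs n (Iic t)ᶜ = 0 := by
      refine measure_mono_null ?_ (hsupp n)
      intro y hy
      simp only [mem_compl_iff, mem_Iic, not_le] at hy
      simp only [mem_compl_iff, mem_Icc, not_and, not_le]
      intro _
      exact lt_of_le_of_lt ht hy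
    have := measure_add_measure_compl (μ := Hs n) (measurableSet_Iic (a := t))
    rw [hc, add_zero, measure_univ] at this
    simp [hFn, this]
  -- sequential compactness of [0,1]^ℚ
  haveI : CompactSpace (Icc (0:ℝ) 1) := isCompact_iff_compactSpace.1 isCompact_Icc
  set u : ℕ → (ℚ → Icc (0:ℝ) 1) := fun n q => ⟨Fn n (q : ℝ), hFn01 n q⟩ with hu
  obtain ⟨a, -, φ, hφ, hconv⟩ :=
    (isCompact_univ (X := ℚ → Icc (0:ℝ) 1)).isSeqCompact (fun n => mem_univ (u n))
  have hpt : ∀ q : ℚ, Tendsto (fun n => Fn (φ n) (q : ℝ)) atTop (𝓝 ((a q : ℝ))) := by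
    intro q
    have h1 : Tendsto (fun n => (u ∘ φ) n q) atTop (𝓝 (a q)) := tendsto_pi_nhds.1 hconv q
    exact (continuous_subtype_val.tendsto (a q)).comp h1
  set G : ℚ → ℝ := fun q => (a q : ℝ) with hG
  have G0 : ∀ q, 0 ≤ G q := fun q => (a q).2.1
  have G1 : ∀ q, G q ≤ 1 := fun q => (a q).2.2
  have Gmono : ∀ q r : ℚ, q ≤ r → G q ≤ G r := fun q r hqr =>
    le_of_tendsto_of_tendsto' (hpt q) (hpt r) fun n => hFnmono (φ n) (by exact_mod_cast hqr)
  have Gzero : ∀ q : ℚ, (q : ℝ) < -L → G q = 0 := fun q hq =>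
    tendsto_nhds_unique (hpt q) (by
      refine Tendsto.congr (fun n => (hFnbot (φ n) q hq).symm) tendsto_const_nhds)
  have Gone : ∀ q : ℚ, L ≤ (q : ℝ) → G q = 1 := fun q hq =>
    tendsto_nhds_unique (hpt q) (by
      refine Tendsto.congr (fun n => (hFntop (φ n) q hq).symm) tendsto_const_nhds)
  -- the limit CDF
  set FF : ℝ → ℝ := fun t => sInf (G '' {q : ℚ | t < (q : ℝ)}) with hFF
  have hne : ∀ t, (G '' {q : ℚ | t < (q : ℝ)}).Nonempty := by
    intro t
    obtain ⟨q, hq⟩ := exists_rat_gt t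
    exact ⟨G q, mem_image_of_mem _ hq⟩
  have hbdd : ∀ t, BddBelow (G '' {q : ℚ | t < (q : ℝ)}) := by
    intro t
    refine ⟨0, ?_⟩
    rintro y ⟨q, -, rfl⟩
    exact G0 q
  have FFle : ∀ {t : ℝ} {q : ℚ}, t < (q : ℝ) → FF t ≤ G q := fun ht =>
    csInf_le (hbdd _) (mem_image_of_mem _ ht)
  have leFF : ∀ {q : ℚ} {t : ℝ}, (q : ℝ) ≤ t → G q ≤ FF t := by
    intro q t hqt
    refine le_csInf (hne t) ?_
    rintro y ⟨r, hr, rfl⟩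
    exact Gmono q r (by exact_mod_cast le_of_lt (lt_of_le_of_lt hqt hr))
  have FFmono : Monotone FF := by
    intro s t hst
    exact csInf_le_csInf (hbdd s) (hne t) (image_mono fun q hq => lt_of_le_of_lt hst hq)
  have FF0 : ∀ t, 0 ≤ FF t := by
    intro t
    refine le_csInf (hne t) ?_
    rintro y ⟨q, -, rfl⟩
    exact G0 q
  have FF1 : ∀ t, FF t ≤ 1 := by
    intro t
    obtain ⟨q, hq⟩ := exists_rat_gt t
    exact (FFle hq).trans (G1 q)
  have FFbot : ∀ t, t < -L → FF t = 0 := by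
    intro t ht
    obtain ⟨q, hq1, hq2⟩ := exists_rat_btwn ht
    exact le_antisymm (by rw [← Gzero q hq2]; exact FFle hq1) (FF0 t)
  have FFtop : ∀ t, L ≤ t → FF t = 1 := by
    intro t ht
    refine le_antisymm (FF1 t) (le_csInf (hne t) ?_)
    rintro y ⟨q, hq, rfl⟩
    rw [Gone q (le_of_lt (lt_of_le_of_lt ht hq))]
  have rc : ∀ x : ℝ, ContinuousWithinAt FF (Ici x) x := by
    intro x
    rw [ContinuousWithinAt]
    refine tendsto_order.2 ⟨?_, ?_⟩
    · intro b hb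
      filter_upwards [self_mem_nhdsWithin] with t ht
      exact hb.trans_le (FFmono ht)
    · intro b hb
      obtain ⟨y, ⟨q, hq, rfl⟩, hyb⟩ := exists_lt_of_csInf_lt (hne x) hb
      filter_upwards [Ico_mem_nhdsGE (show x < (q:ℝ) from hq)] with t ht
      exact lt_of_le_of_lt (FFle ht.2) hyb
  set SF : StieltjesFunction ℝ := ⟨FF, FFmono, rc⟩ with hSF
  have hSFapp : ∀ t, SF t = FF t := fun t => rfl
  have hbot : Tendsto FF atBot (𝓝 0) := by
    refine Tendsto.congr' ?_ (tendsto_const_nhds (α := ℝ) (f := atBot (α := ℝ)))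
    filter_upwards [eventually_le_atBot (-L-1)] with t ht
    exact (FFbot t (by linarith)).symm
  have htop : Tendsto FF atTop (𝓝 1) := by
    refine Tendsto.congr' ?_ (tendsto_const_nhds (α := ℝ) (f := atTop (α := ℝ)))
    filter_upwards [eventually_ge_atTop L] with t ht
    exact (FFtop t ht).symm
  have hIic : ∀ t, SF.measure (Iic t) = ENNReal.ofReal (FF t) := by
    intro t
    rw [SF.measure_Iic hbot, hSFapp, sub_zero]
  haveI hP : IsProbabilityMeasure SF.measure := by
    constructor
    rw [SF.measure_univ hbot htop]
    norm_num
  have hsupp0 : SF.measure (Icc (-L) L)ᶜ = 0 := by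
    have hcompl : (Icc (-L) L)ᶜ = Iio (-L) ∪ Ioi L := by
      ext x
      simp only [mem_compl_iff, mem_Icc, not_and, not_le, mem_union, mem_Iio, mem_Ioi]
      constructor
      · intro hx
        by_cases h1 : -L ≤ x
        · exact Or.inr (hx h1)
        · exact Or.inl (lt_of_not_ge h1)
      · rintro (h1 | h1) h2
        · linarith
        · exact h1
    rw [hcompl]
    refine measure_union_null ?_ ?_
    · have hsub : Iio (-L) ⊆ ⋃ n : ℕ, Iic (-L - (1 / ((n:ℝ) + 1))) := by
        intro x hx
        simp only [mem_Iio] at hx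
        obtain ⟨n, hn⟩ := exists_nat_one_div_lt (show (0:ℝ) < -L - x by linarith)
        refine mem_iUnion.2 ⟨n, ?_⟩
        simp only [mem_Iic]
        linarith
      refine measure_mono_null hsub (le_antisymm ((measure_iUnion_le _).trans ?_) zero_le)
      have : ∀ n : ℕ, SF.measure (Iic (-L - (1 / ((n:ℝ) + 1)))) = 0 := by
        intro n
        have hlt : -L - (1 / ((n:ℝ) + 1)) < -L := by
          have : (0:ℝ) < 1 / ((n:ℝ) + 1) := by positivity
          linarith
        rw [hIic, FFbot _ hlt]
        simp
      simp only [one_div] at this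
      simp [this]
    · rw [← Set.compl_Iic, measure_compl measurableSet_Iic (measure_ne_top _ _), measure_univ,
        hIic, FFtop L le_rfl]
      simp
  -- a.e. convergence of CDFs
  have hIio0 : ∀ t, ContinuousAt FF t → SF.measure (Iio t) = ENNReal.ofReal (FF t) := by
    intro t hcont
    have hll : Function.leftLim FF t = FF t :=
      (FFmono.continuousWithinAt_Iio_iff_leftLim_eq).1 hcont.continuousWithinAt
    have hsing : SF.measure {t} = 0 := by
      rw [SF.measure_singleton, hSFapp, hll, sub_self]
      simp
    have hsplit : SF.measure (Iic t) = SF.measure (Iio t) + SF.measure {t} := by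
      rw [← measure_union (by simp) (measurableSet_singleton t), Iio_union_right]
    rw [hsing, add_zero] at hsplit
    rw [← hsplit, hIic]
  have hconvIio : ∀ t, ContinuousAt FF t →
      Tendsto (fun n => (Hs (φ n) (Iio t)).toReal) atTop (𝓝 (FF t)) := by
    intro t hcont
    refine tendsto_order.2 ⟨?_, ?_⟩
    · intro b hb
      have h1 : ∀ᶠ s in 𝓝 t, b < FF s := hcont.eventually (eventually_gt_nhds hb)
      have h2 : ∀ᶠ s in 𝓝[<] t, b < FF s ∧ s ∈ Iio t :=
        (h1.filter_mono nhdsWithin_le_nhds).and self_mem_nhdsWithin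
      obtain ⟨s, hbs, hst⟩ := h2.exists
      obtain ⟨q, hsq, hqt⟩ := exists_rat_btwn (show s < t from hst)
      have hGq : b < G q := lt_of_lt_of_le hbs (FFle hsq)
      filter_upwards [(hpt q).eventually (eventually_gt_nhds hGq)] with n hn
      refine hn.trans_le (ENNReal.toReal_mono (measure_ne_top _ _) (measure_mono ?_))
      intro y hy
      exact lt_of_le_of_lt hy hqt
    · intro b hb
      obtain ⟨y, ⟨q, hq, rfl⟩, hyb⟩ := exists_lt_of_csInf_lt (hne t) hb
      filter_upwards [(hpt q).eventually (eventually_lt_nhds hyb)] with n hn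
      refine lt_of_le_of_lt (ENNReal.toReal_mono (measure_ne_top _ _) (measure_mono ?_)) hn
      intro y hy
      exact le_of_lt (lt_of_lt_of_le hy (le_of_lt (show t < (q:ℝ) from hq)))
  -- conclusion
  refine ⟨SF.measure, φ, hP, hsupp0, hφ, ?_⟩
  intro h hh
  rw [repr_integral hL h hh SF.measure hsupp0]
  have hrepr : ∀ n, ∫ ξ, h ξ ∂(Hs (φ n))
      = h L - ∫ t in Ioc (-L) L, deriv h t * (Hs (φ n) (Iio t)).toReal :=
    fun n => repr_integral hL h hh (Hs (φ n)) (hsupp (φ n))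
  have hder_cont : Continuous (deriv h) := hh.continuous_deriv le_rfl
  obtain ⟨M, hM⟩ := isCompact_Icc.exists_bound_of_continuousOn
    (hder_cont.continuousOn (s := Icc (-L) L))
  have hM0 : 0 ≤ M := le_trans (norm_nonneg _) (hM (-L) ⟨le_rfl, by linarith⟩)
  have hmain : Tendsto (fun n => ∫ t in Ioc (-L) L, deriv h t * (Hs (φ n) (Iio t)).toReal)
      atTop (𝓝 (∫ t in Ioc (-L) L, deriv h t * (SF.measure (Iio t)).toReal)) := by
    refine tendsto_integral_of_dominated_convergence (bound := fun _ => M) ?_ ?_ ?_ ?_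
    · intro n
      have hmono : Monotone fun t => (Hs (φ n) (Iio t)).toReal := fun s t hst =>
        ENNReal.toReal_mono (measure_ne_top _ _) (measure_mono (Iio_subset_Iio hst))
      exact (((measurable_deriv h).mul hmono.measurable).aestronglyMeasurable).restrict
    · exact (integrableOn_const measure_Ioc_lt_top.ne)
    · intro n
      filter_upwards [ae_restrict_mem measurableSet_Ioc] with t ht
      rw [norm_mul]
      have h1 : ‖deriv h t‖ ≤ M := hM t ⟨le_of_lt ht.1, ht.2⟩
      have h2 : ‖(Hs (φ n) (Iio t)).toReal‖ ≤ 1 := by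
        rw [Real.norm_eq_abs, abs_of_nonneg ENNReal.toReal_nonneg]
        have : Hs (φ n) (Iio t) ≤ 1 := prob_le_one
        calc (Hs (φ n) (Iio t)).toReal ≤ (1:ℝ≥0∞).toReal :=
              ENNReal.toReal_mono ENNReal.one_ne_top this
          _ = 1 := by simp
      calc ‖deriv h t‖ * ‖(Hs (φ n) (Iio t)).toReal‖ ≤ M * 1 :=
            mul_le_mul h1 h2 (norm_nonneg _) hM0
        _ = M := mul_one M
    · have hcount : Set.Countable {t : ℝ | ¬ ContinuousAt FF t} :=
        FFmono.countable_not_continuousAt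
      have hae : ∀ᵐ t ∂(volume : Measure ℝ), ContinuousAt FF t := by
        rw [ae_iff]
        exact hcount.measure_zero _
      filter_upwards [ae_restrict_of_ae hae] with t hcont
      have h1 : Tendsto (fun n => deriv h t * (Hs (φ n) (Iio t)).toReal) atTop
          (𝓝 (deriv h t * FF t)) := tendsto_const_nhds.mul (hconvIio t hcont)
      have h2 : (SF.measure (Iio t)).toReal = FF t := by
        rw [hIio0 t hcont, ENNReal.toReal_ofReal (FF0 t)]
      rw [h2]
      exact h1
  simp only [hrepr]
  exact hmain.const_sub (h L)

lemma J_tendsto {σ L : ℝ} (hσ : 0 < σ) {p : ℝ → ℝ} (hpm : Measurable p) (hp : ∀ x, 0 ≤ p x)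
    (hmom : Integrable fun x => (1 + x ^ 2) * p x)
    (Hs : ℕ → Measure ℝ) (hprob : ∀ n, IsProbabilityMeasure (Hs n))
    (hsupp : ∀ n, Hs n (Icc (-L) L)ᶜ = 0)
    (H₀ : Measure ℝ) [IsProbabilityMeasure H₀] (hsupp0 : H₀ (Icc (-L) L)ᶜ = 0)
    (hmix : ∀ x, Tendsto (fun n => mixDensity σ (Hs n) x) atTop (𝓝 (mixDensity σ H₀ x))) :
    Tendsto (fun n => ∫ x, p x * Real.log (mixDensity σ (Hs n) x)) atTop
      (𝓝 (∫ x, p x * Real.log (mixDensity σ H₀ x))) := by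
  refine tendsto_integral_of_dominated_convergence
    (bound := fun x => Cc σ L * ((1 + x ^ 2) * p x)) ?_ (hmom.const_mul _) ?_ ?_
  · intro n
    haveI := hprob n
    exact (hpm.mul (Real.measurable_log.comp
      (mix_continuous hσ (Hs n)).measurable)).aestronglyMeasurable
  · intro n
    haveI := hprob n
    exact ae_of_all _ fun x => plogmix_bound hσ hp (Hs n) (hsupp n) x
  · refine ae_of_all _ fun x => ?_
    have hpos : 0 < mixDensity σ H₀ x := mix_pos hσ H₀ hsupp0 x
    have hlog : Tendsto (fun n => Real.log (mixDensity σ (Hs n) x)) atTop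
        (𝓝 (Real.log (mixDensity σ H₀ x))) :=
      ((Real.continuousAt_log (ne_of_gt hpos)).tendsto).comp (hmix x)
    exact hlog.const_mul (p x)

lemma pt_id {p f : ℝ → ℝ} (hp : ∀ x, 0 ≤ p x) {x : ℝ} (hf : 0 < f x) :
    p x * Real.log (p x / f x) = p x * Real.log (p x) - p x * Real.log (f x) := by
  by_cases hx : p x = 0
  · simp [hx]
  · rw [Real.log_div hx (ne_of_gt hf), mul_sub]

end KLProj

/-- Existence of the KL projection: for a probability density `p` with finite second moment,
the map `H ↦ KL(p ‖ f_H)` attains its minimum over `P([-L,L])`. -/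
theorem kl_projection_exists
    (σ L : ℝ) (hσ : 0 < σ) (hL : 0 < L)
    (p : ℝ → ℝ) (hpm : Measurable p) (hp : ∀ x, 0 ≤ p x) (hpd : ∫ x, p x = 1)
    (hmom : Integrable (fun x => (1 + x ^ 2) * p x)) :
    ∃ H₀ : Measure ℝ, IsProbabilityMeasure H₀ ∧ H₀ (Set.Icc (-L) L)ᶜ = 0 ∧
      ∀ H : Measure ℝ, IsProbabilityMeasure H → H (Set.Icc (-L) L)ᶜ = 0 →
        klDiv' p (mixDensity σ H₀) ≤ klDiv' p (mixDensity σ H) := by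
  classical
  have hd0 : (Measure.dirac (0:ℝ)) (Icc (-L) L)ᶜ = 0 := by
    rw [Measure.dirac_apply' _ measurableSet_Icc.compl]
    have h0 : (0:ℝ) ∈ Icc (-L) L := ⟨by linarith, le_of_lt hL⟩
    simp [h0]
  haveI : IsProbabilityMeasure (Measure.dirac (0:ℝ)) := Measure.dirac.isProbabilityMeasure
  by_cases hPL : Integrable (fun x => p x * Real.log (p x))
  · -- main case: maximize `H ↦ ∫ p log f_H`
    set J : Measure ℝ → ℝ := fun H => ∫ x, p x * Real.log (mixDensity σ H x) with hJdef
    set SV : Set ℝ := J '' {H | IsProbabilityMeasure H ∧ H (Icc (-L) L)ᶜ = 0} with hSVdef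
    have hSVne : SV.Nonempty := ⟨J (Measure.dirac 0), ⟨Measure.dirac 0, ⟨inferInstance, hd0⟩, rfl⟩⟩
    have hJle : ∀ H : Measure ℝ, IsProbabilityMeasure H → H (Icc (-L) L)ᶜ = 0 →
        J H ≤ KLProj.Cc σ L * ∫ x, (1 + x ^ 2) * p x := by
      intro H h1 h2
      haveI := h1
      have hmono := integral_mono (KLProj.integrable_plogmix hσ hpm hp hmom H h2)
        (hmom.const_mul (KLProj.Cc σ L))
        (fun x => le_trans (le_abs_self _) (by
          have := KLProj.plogmix_bound hσ hp H h2 x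
          rwa [Real.norm_eq_abs] at this))
      calc J H ≤ ∫ x, KLProj.Cc σ L * ((1 + x ^ 2) * p x) := hmono
        _ = KLProj.Cc σ L * ∫ x, (1 + x ^ 2) * p x := integral_const_mul _ _
    have hSVbdd : BddAbove SV := by
      refine ⟨KLProj.Cc σ L * ∫ x, (1 + x ^ 2) * p x, ?_⟩
      rintro y ⟨H, ⟨h1, h2⟩, rfl⟩
      exact hJle H h1 h2
    obtain ⟨ys, -, hystend, hysmem⟩ := exists_seq_tendsto_sSup hSVne hSVbdd
    choose Hs hHs hJHs using hysmem
    have hprob : ∀ n, IsProbabilityMeasure (Hs n) := fun n => (hHs n).1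
    have hsupp : ∀ n, Hs n (Icc (-L) L)ᶜ = 0 := fun n => (hHs n).2
    obtain ⟨H₀, φ, hP0, hs0, hφ, hconv⟩ := KLProj.helly hL Hs hprob hsupp
    haveI := hP0
    have hmix : ∀ x, Tendsto (fun n => mixDensity σ (Hs (φ n)) x) atTop
        (𝓝 (mixDensity σ H₀ x)) := by
      intro x
      have := hconv (fun ξ => gaussianPDFReal ξ ((σ ^ 2).toNNReal) x) (KLProj.contDiff_gauss σ x)
      simpa [mixDensity] using this
    have hJconv : Tendsto (fun n => J (Hs (φ n))) atTop (𝓝 (J H₀)) :=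
      KLProj.J_tendsto hσ hpm hp hmom (fun n => Hs (φ n)) (fun n => hprob _)
        (fun n => hsupp _) H₀ hs0 hmix
    have hJsup : J H₀ = sSup SV := by
      refine tendsto_nhds_unique hJconv ?_
      have h1 : Tendsto (fun n => ys (φ n)) atTop (𝓝 (sSup SV)) :=
        hystend.comp (hφ.tendsto_atTop)
      exact h1.congr fun n => (hJHs (φ n)).symm
    refine ⟨H₀, hP0, hs0, ?_⟩
    intro H h1 h2
    haveI := h1
    have hkl : ∀ (H' : Measure ℝ), IsProbabilityMeasure H' → H' (Icc (-L) L)ᶜ = 0 →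
        klDiv' p (mixDensity σ H') = (∫ x, p x * Real.log (p x)) - J H' := by
      intro H' h1' h2'
      haveI := h1'
      have hfun : (fun x => p x * Real.log (p x / mixDensity σ H' x))
          = fun x => p x * Real.log (p x) - p x * Real.log (mixDensity σ H' x) :=
        funext fun x => KLProj.pt_id hp (KLProj.mix_pos hσ H' h2' x)
      rw [klDiv', hfun,
        integral_sub hPL (KLProj.integrable_plogmix hσ hpm hp hmom H' h2')]
    rw [hkl H₀ hP0 hs0, hkl H h1 h2]
    have hle : J H ≤ J H₀ := by
      rw [hJsup]
      exact le_csSup hSVbdd ⟨H, ⟨h1, h2⟩, rfl⟩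
    linarith
  · -- degenerate case: the KL integrand is never integrable, all values are `0`
    have hzero : ∀ (H' : Measure ℝ), IsProbabilityMeasure H' → H' (Icc (-L) L)ᶜ = 0 →
        klDiv' p (mixDensity σ H') = 0 := by
      intro H' h1' h2'
      haveI := h1'
      rw [klDiv']
      refine integral_undef ?_
      intro hI
      apply hPL
      have hfun : (fun x => p x * Real.log (p x / mixDensity σ H' x))
          = fun x => p x * Real.log (p x) - p x * Real.log (mixDensity σ H' x) :=
        funext fun x => KLProj.pt_id hp (KLProj.mix_pos hσ H' h2' x)
      rw [hfun] at hI
      have hadd := hI.add (KLProj.integrable_plogmix hσ hpm hp hmom H' h2')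
      refine hadd.congr (ae_of_all _ fun x => ?_)
      simp only [Pi.add_apply]
      ring
    refine ⟨Measure.dirac 0, inferInstance, hd0, ?_⟩
    intro H h1 h2
    rw [hzero (Measure.dirac 0) inferInstance hd0, hzero H h1 h2]
end

section
/- NPMLE tail mass bound: let Ĥ satisfy ψ(ξ) ≤ 1 for all ξ and ψ = 1 Ĥ-a.e. (the NPMLE optimality conditions), with ψ(ξ) = (1/n)Σᵢ φ_σ(Xᵢ-ξ)/f_Ĥ(Xᵢ). For a nonempty set S ⊆ ℝ with distance function d_S, let r = √(2σ² log(2n)) and A_R = {ξ : d_S(ξ) > R}. Then for any R > r, Ĥ(A_R) ≤ (2/n) Σᵢ 1(d_S(Xᵢ) > R - r). -/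
open MeasureTheory ProbabilityTheory Real

/-- NPMLE tail mass bound: let `Ĥ` satisfy the NPMLE optimality conditions `ψ(ξ) ≤ 1` for
all `ξ` and `ψ = 1` `Ĥ`-a.e., where `ψ(ξ) = (1/n)Σᵢ φ_σ(Xᵢ-ξ)/f_Ĥ(Xᵢ)`.  For a nonempty
`S ⊆ ℝ` with distance function `d_S`, `r = √(2σ² log(2n))` and any `R > r`,
`Ĥ{ξ : d_S(ξ) > R} ≤ (2/n) Σᵢ 1(d_S(Xᵢ) > R - r)`. -/
theorem npmle_tail_mass_bound
    (n : ℕ) (hn : 0 < n) (X : Fin n → ℝ) (σ : ℝ) (hσ : 0 < σ)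
    (S : Set ℝ) (hS : S.Nonempty)
    (Hhat : Measure ℝ) [IsProbabilityMeasure Hhat]
    (f : ℝ → ℝ)
    (hf : ∀ x, f x = ∫ ξ, gaussianPDFReal ξ ((σ ^ 2).toNNReal) x ∂Hhat)
    (hpos : ∀ i, 0 < f (X i))
    (ψ : ℝ → ℝ)
    (hψ : ∀ ξ, ψ ξ =
      (1 / (n : ℝ)) * ∑ i, gaussianPDFReal ξ ((σ ^ 2).toNNReal) (X i) / f (X i))
    (hopt : ∀ ξ, ψ ξ ≤ 1)
    (hae : ∀ᵐ ξ ∂Hhat, ψ ξ = 1)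
    (r R : ℝ) (hr : r = Real.sqrt (2 * σ ^ 2 * Real.log (2 * n))) (hR : r < R) :
    Hhat {ξ : ℝ | R < Metric.infDist ξ S}
      ≤ ENNReal.ofReal ((2 / (n : ℝ)) *
          ∑ i, if R - r < Metric.infDist (X i) S then (1 : ℝ) else 0) := by
  have hv : ((σ ^ 2).toNNReal : ℝ) = σ ^ 2 := Real.coe_toNNReal _ (sq_nonneg σ)
  have hn' : (0:ℝ) < n := Nat.cast_pos.mpr hn
  have hn1 : (1:ℝ) ≤ n := Nat.one_le_cast.mpr hn
  set φ0 : ℝ := (Real.sqrt (2 * π * σ ^ 2))⁻¹ with hφ0def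
  have hφ0pos : 0 < φ0 := by
    apply inv_pos.mpr
    apply Real.sqrt_pos.mpr
    positivity
  have hgauss : ∀ ξ x : ℝ, gaussianPDFReal ξ ((σ ^ 2).toNNReal) x
      = φ0 * Real.exp (-(x - ξ)^2 / (2 * σ^2)) := by
    intro ξ x
    show (Real.sqrt (2 * π * ((σ ^ 2).toNNReal : ℝ)))⁻¹
        * Real.exp (-(x - ξ)^2 / (2 * ((σ ^ 2).toNNReal : ℝ)))
      = φ0 * Real.exp (-(x - ξ)^2 / (2 * σ^2))
    rw [hv]
  have hterm_nonneg : ∀ (ξ : ℝ) (i : Fin n),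
      0 ≤ gaussianPDFReal ξ ((σ ^ 2).toNNReal) (X i) / f (X i) :=
    fun ξ i => div_nonneg (gaussianPDFReal_nonneg _ _ _) (hpos i).le
  -- lower bound on f
  have hflb : ∀ i, φ0 / n ≤ f (X i) := by
    intro i
    have h1 := hopt (X i)
    rw [hψ (X i)] at h1
    have h2 : gaussianPDFReal (X i) ((σ ^ 2).toNNReal) (X i) / f (X i)
        ≤ ∑ j, gaussianPDFReal (X i) ((σ ^ 2).toNNReal) (X j) / f (X j) :=
      Finset.single_le_sum (f := fun j => gaussianPDFReal (X i) ((σ ^ 2).toNNReal) (X j) / f (X j)) (fun j _ => hterm_nonneg _ j) (Finset.mem_univ i)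
    have h3 : gaussianPDFReal (X i) ((σ ^ 2).toNNReal) (X i) = φ0 := by
      rw [hgauss]; simp
    rw [h3] at h2
    have h4 : φ0 / f (X i) ≤ n := by
      have h5 : (1 / (n:ℝ)) * (φ0 / f (X i)) ≤ 1 := by
        calc (1 / (n:ℝ)) * (φ0 / f (X i))
            ≤ (1 / (n:ℝ)) * ∑ j, gaussianPDFReal (X i) ((σ ^ 2).toNNReal) (X j) / f (X j) := by
              apply mul_le_mul_of_nonneg_left h2 (by positivity)
          _ ≤ 1 := h1
      rw [div_mul_eq_mul_div, one_mul, div_le_one hn'] at h5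
      exact h5
    rw [div_le_iff₀ (hpos i)] at h4
    rw [div_le_iff₀ hn']
    linarith
  -- facts about r
  have hlog : 0 ≤ Real.log (2 * n) := Real.log_nonneg (by linarith)
  have hr0 : 0 ≤ r := hr ▸ Real.sqrt_nonneg _
  have hrsq : r ^ 2 = 2 * σ ^ 2 * Real.log (2 * n) := by
    rw [hr, Real.sq_sqrt (by positivity)]
  -- gaussian tail bound
  have htail : ∀ ξ x : ℝ, r ≤ |x - ξ| →
      gaussianPDFReal ξ ((σ ^ 2).toNNReal) x ≤ φ0 / (2 * n) := by
    intro ξ x hd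
    rw [hgauss]
    have h1 : r ^ 2 ≤ (x - ξ)^2 := by
      nlinarith [sq_abs (x - ξ), abs_nonneg (x - ξ)]
    have h2 : Real.exp (-(x - ξ)^2 / (2 * σ^2)) ≤ Real.exp (-(r^2) / (2 * σ^2)) := by
      apply Real.exp_le_exp.mpr
      apply div_le_div_of_nonneg_right _ (by positivity)
      · linarith
    have h3 : Real.exp (-(r^2) / (2 * σ^2)) = (2 * (n:ℝ))⁻¹ := by
      rw [hrsq]
      have : -(2 * σ ^ 2 * Real.log (2 * n)) / (2 * σ^2) = -Real.log (2 * n) := by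
        field_simp
      rw [this, Real.exp_neg, Real.exp_log (by positivity)]
    calc φ0 * Real.exp (-(x - ξ)^2 / (2 * σ^2))
        ≤ φ0 * Real.exp (-(r^2) / (2 * σ^2)) := by nlinarith
      _ = φ0 / (2 * n) := by rw [h3]; ring
  -- key pointwise inequality on A
  have hkey : ∀ ξ : ℝ, R < Metric.infDist ξ S → ψ ξ = 1 →
      1 ≤ (2 / (n:ℝ)) * ∑ i, (if R - r < Metric.infDist (X i) S then (1:ℝ) else 0)
        * (gaussianPDFReal ξ ((σ ^ 2).toNNReal) (X i) / f (X i)) := by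
    intro ξ hξ hψξ
    set t : Fin n → ℝ := fun i => gaussianPDFReal ξ ((σ ^ 2).toNNReal) (X i) / f (X i) with ht
    have hsum : ∑ i, t i = n := by
      have h : (1 / (n:ℝ)) * ∑ i, t i = 1 := by rw [← hψ ξ, hψξ]
      field_simp at h
      linarith
    have hbd : ∀ i, t i ≤ (if R - r < Metric.infDist (X i) S then (1:ℝ) else 0) * t i + 1/2 := by
      intro i
      by_cases hi : R - r < Metric.infDist (X i) S
      · rw [if_pos hi, one_mul]; linarith
      · rw [if_neg hi, zero_mul, zero_add]
        push_neg at hi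
        have hd : r ≤ |X i - ξ| := by
          have h1 : Metric.infDist ξ S ≤ Metric.infDist (X i) S + dist ξ (X i) :=
            Metric.infDist_le_infDist_add_dist
          rw [Real.dist_eq] at h1
          have h2 : |ξ - X i| = |X i - ξ| := abs_sub_comm _ _
          linarith
        have h5 := htail ξ (X i) hd
        have h6 : t i ≤ (φ0/(2*n))/(φ0/n) :=
          div_le_div₀ (by positivity) h5 (by positivity) (hflb i)
        have h7 : (φ0/(2*(n:ℝ)))/(φ0/n) = 1/2 := by
          field_simp
        linarith
    have hTsum : ∑ i, t i ≤ (∑ i, (if R - r < Metric.infDist (X i) S then (1:ℝ) else 0) * t i)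
        + (n:ℝ) * (1/2) := by
      calc ∑ i, t i
          ≤ ∑ i, ((if R - r < Metric.infDist (X i) S then (1:ℝ) else 0) * t i + 1/2) :=
            Finset.sum_le_sum fun i _ => hbd i
        _ = (∑ i, (if R - r < Metric.infDist (X i) S then (1:ℝ) else 0) * t i) + (n:ℝ) * (1/2) := by
            rw [Finset.sum_add_distrib, Finset.sum_const, Finset.card_univ, Fintype.card_fin]
            push_cast
            ring
    have hT2 : (n:ℝ)/2 ≤ ∑ i, (if R - r < Metric.infDist (X i) S then (1:ℝ) else 0) * t i := by
      linarith
    have : (2 / (n:ℝ)) * ((n:ℝ)/2)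
        ≤ (2 / (n:ℝ)) * ∑ i, (if R - r < Metric.infDist (X i) S then (1:ℝ) else 0) * t i :=
      mul_le_mul_of_nonneg_left hT2 (by positivity)
    have heq : (2 / (n:ℝ)) * ((n:ℝ)/2) = 1 := by field_simp
    linarith
  -- measurability / integrability
  set A : Set ℝ := {ξ | R < Metric.infDist ξ S} with hA
  have hAm : MeasurableSet A :=
    (isOpen_lt continuous_const (Metric.continuous_infDist_pt S)).measurableSet
  have hgi_cont : ∀ x : ℝ, Continuous fun ξ => gaussianPDFReal ξ ((σ ^ 2).toNNReal) x := by
    intro x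
    have : (fun ξ => gaussianPDFReal ξ ((σ ^ 2).toNNReal) x)
        = fun ξ => φ0 * Real.exp (-(x - ξ)^2 / (2 * σ^2)) := funext fun ξ => hgauss ξ x
    rw [this]
    exact continuous_const.mul (Real.continuous_exp.comp
      ((((continuous_const.sub continuous_id).pow 2).neg).div_const _))
  have hgi_int : ∀ x : ℝ, Integrable (fun ξ => gaussianPDFReal ξ ((σ ^ 2).toNNReal) x) Hhat := by
    intro x
    refine (integrable_const φ0).mono' ((hgi_cont x).aestronglyMeasurable) ?_
    refine ae_of_all _ fun ξ => ?_
    rw [Real.norm_eq_abs, abs_of_nonneg (gaussianPDFReal_nonneg _ _ _), hgauss]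
    have he : Real.exp (-(x - ξ)^2 / (2 * σ^2)) ≤ 1 := by
      apply Real.exp_le_one_iff.mpr
      rw [neg_div]
      exact neg_nonpos.mpr (by positivity)
    nlinarith
  set h : ℝ → ℝ := fun ξ => (2 / (n:ℝ)) *
    ∑ i, (if R - r < Metric.infDist (X i) S then (1:ℝ) else 0)
      * (gaussianPDFReal ξ ((σ ^ 2).toNNReal) (X i) / f (X i)) with hhdef
  have hh_int : Integrable h Hhat := by
    apply Integrable.const_mul
    apply integrable_finset_sum
    intro i _
    exact (((hgi_int (X i)).div_const (f (X i))).const_mul _)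
  have hh_nonneg : ∀ ξ, 0 ≤ h ξ := by
    intro ξ
    apply mul_nonneg (by positivity)
    apply Finset.sum_nonneg
    intro i _
    exact mul_nonneg (by positivity) (hterm_nonneg ξ i)
  have hint_h : ∫ ξ, h ξ ∂Hhat
      = (2 / (n:ℝ)) * ∑ i, (if R - r < Metric.infDist (X i) S then (1:ℝ) else 0) := by
    rw [hhdef]
    rw [integral_const_mul, integral_finset_sum _
      (fun i _ => ((hgi_int (X i)).div_const (f (X i))).const_mul _)]
    congr 1
    refine Finset.sum_congr rfl fun i _ => ?_
    rw [integral_const_mul, integral_div, ← hf (X i), div_self (hpos i).ne', mul_one]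
  -- put it together
  have h1le : ∀ᵐ ξ ∂(Hhat.restrict A), (1:ℝ) ≤ h ξ := by
    rw [ae_restrict_iff' hAm]
    filter_upwards [hae] with ξ hψξ hξA
    exact hkey ξ hξA hψξ
  have hstep1 : (Hhat A).toReal ≤ ∫ ξ in A, h ξ ∂Hhat := by
    have hmeas : (Hhat A).toReal = ∫ _ξ in A, (1:ℝ) ∂Hhat := by
      rw [setIntegral_const]; simp; rfl
    rw [hmeas]
    exact integral_mono_ae (integrable_const 1) hh_int.restrict h1le
  have hstep2 : ∫ ξ in A, h ξ ∂Hhat ≤ ∫ ξ, h ξ ∂Hhat :=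
    setIntegral_le_integral hh_int (ae_of_all _ hh_nonneg)
  calc Hhat A = ENNReal.ofReal ((Hhat A).toReal) :=
        (ENNReal.ofReal_toReal (measure_ne_top _ _)).symm
    _ ≤ ENNReal.ofReal ((2 / (n : ℝ)) *
          ∑ i, if R - r < Metric.infDist (X i) S then (1 : ℝ) else 0) := by
        apply ENNReal.ofReal_le_ofReal
        rw [← hint_h]
        linarith
end

section
/- Finiteness of the neighborhood envelope: suppose F̃ = H ⋆ N(0,σ²) for some probability measure H and σ > 0, and F̃ is within Kolmogorov–Smirnov distance η < 1/2 of the empirical distribution F_n of distinct points X_(1) < X_(n). Then σ ≤ (X_(n) - X_(1)) / (√(2π)(1 - 2η)). -/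
open MeasureTheory ProbabilityTheory Real
open scoped ENNReal NNReal

/-- Finiteness of the neighborhood envelope: if `F̃` is the CDF of `H ⋆ N(0,σ²)` and `F̃` is
within Kolmogorov–Smirnov distance `η < 1/2` of the empirical CDF `Fₙ` of points with
minimum `a` and maximum `b`, `a < b`, then `σ ≤ (b - a)/(√(2π)(1 - 2η))`. -/
theorem neighborhood_envelope_finite
    (n : ℕ) (hn : 0 < n) (X : Fin n → ℝ)
    (σ η : ℝ) (hσ : 0 < σ) (hη : η < 1 / 2)
    (H : Measure ℝ) [IsProbabilityMeasure H]
    (Ftil : ℝ → ℝ)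
    (hF : ∀ x, Ftil x =
      ∫ t in Set.Iic x, (∫ ξ, gaussianPDFReal ξ ((σ ^ 2).toNNReal) t ∂H))
    (Fn : ℝ → ℝ)
    (hFn : ∀ x, Fn x = ((Finset.univ.filter (fun i => X i ≤ x)).card : ℝ) / (n : ℝ))
    (hKS : ∀ x, |Fn x - Ftil x| ≤ η)
    (a b : ℝ)
    (ha : ∀ i, a ≤ X i) (ha' : ∃ i, X i = a)
    (hb : ∀ i, X i ≤ b) (hb' : ∃ i, X i = b)
    (hab : a < b) :
    σ ≤ (b - a) / (Real.sqrt (2 * π) * (1 - 2 * η)) := by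
  set v : ℝ≥0 := (σ ^ 2).toNNReal with hv_def
  have hv : v ≠ 0 := by
    simp [hv_def, Real.toNNReal_eq_zero, not_le]
    positivity
  have hvcoe : (v : ℝ) = σ ^ 2 := Real.coe_toNNReal _ (by positivity)
  set C : ℝ := (Real.sqrt (2 * π) * σ)⁻¹ with hC_def
  have hs2π : 0 < Real.sqrt (2 * π) := Real.sqrt_pos.2 (by positivity)
  have hC_pos : 0 < C := by positivity
  have hsqrt : Real.sqrt (2 * π * v) = Real.sqrt (2 * π) * σ := by
    rw [hvcoe, Real.sqrt_mul (by positivity), Real.sqrt_sq hσ.le]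
  -- pointwise bound on the gaussian pdf
  have hbound : ∀ ξ t : ℝ, gaussianPDFReal ξ v t ≤ C := by
    intro ξ t
    rw [gaussianPDFReal, hsqrt, hC_def]
    calc (Real.sqrt (2 * π) * σ)⁻¹ * rexp (-(t - ξ) ^ 2 / (2 * v))
        ≤ (Real.sqrt (2 * π) * σ)⁻¹ * 1 := by
          apply mul_le_mul_of_nonneg_left _ (by positivity)
          rw [Real.exp_le_one_iff]
          apply div_nonpos_of_nonpos_of_nonneg (neg_nonpos.2 (sq_nonneg _)) (by positivity)
      _ = (Real.sqrt (2 * π) * σ)⁻¹ := mul_one _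
  set g : ℝ → ℝ := fun t => ∫ ξ, gaussianPDFReal ξ v t ∂H with hg_def
  have hjm : StronglyMeasurable (fun p : ℝ × ℝ => gaussianPDFReal p.1 v p.2) := by
    apply Continuous.stronglyMeasurable
    simp only [gaussianPDFReal_def]
    fun_prop
  have hint : ∀ t, Integrable (fun ξ => gaussianPDFReal ξ v t) H := by
    intro t
    refine Integrable.mono' (integrable_const C) ?_ ?_
    · exact Continuous.aestronglyMeasurable (by simp only [gaussianPDFReal_def]; fun_prop)
    · exact Filter.Eventually.of_forall fun ξ => by
        rw [Real.norm_of_nonneg (gaussianPDFReal_nonneg _ _ _)]; exact hbound ξ t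
  have hg_nonneg : ∀ t, 0 ≤ g t := fun t =>
    integral_nonneg fun ξ => gaussianPDFReal_nonneg _ _ _
  have hg_le : ∀ t, g t ≤ C := by
    intro t
    calc g t ≤ ∫ _, C ∂H := integral_mono (hint t) (integrable_const C) (fun ξ => hbound ξ t)
      _ = C := by simp
  -- integrability of g
  have hg_sm : StronglyMeasurable g := hjm.integral_prod_left'
  have hg_int : Integrable g := by
    refine ⟨hg_sm.aestronglyMeasurable, ?_⟩
    rw [hasFiniteIntegral_iff_norm]
    have key : ∀ t, ENNReal.ofReal ‖g t‖ ≤ ∫⁻ ξ, ENNReal.ofReal (gaussianPDFReal ξ v t) ∂H := by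
      intro t
      rw [ofReal_norm_eq_enorm]
      calc ‖g t‖ₑ ≤ ∫⁻ ξ, ‖gaussianPDFReal ξ v t‖ₑ ∂H :=
            enorm_integral_le_lintegral_enorm _
        _ = ∫⁻ ξ, ENNReal.ofReal (gaussianPDFReal ξ v t) ∂H := by
            apply lintegral_congr fun ξ => ?_
            rw [← ofReal_norm_eq_enorm,
              Real.norm_of_nonneg (gaussianPDFReal_nonneg _ _ _)]
    calc ∫⁻ t, ENNReal.ofReal ‖g t‖
        ≤ ∫⁻ t, ∫⁻ ξ, ENNReal.ofReal (gaussianPDFReal ξ v t) ∂H := lintegral_mono key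
      _ = ∫⁻ ξ, (∫⁻ t, ENNReal.ofReal (gaussianPDFReal ξ v t)) ∂H := by
          exact lintegral_lintegral_swap
            (f := fun t ξ => ENNReal.ofReal (gaussianPDFReal ξ v t))
            (ENNReal.measurable_ofReal.comp
              (hjm.measurable.comp measurable_swap)).aemeasurable
      _ = ∫⁻ _, 1 ∂H := by
          exact lintegral_congr fun ξ => lintegral_gaussianPDFReal_eq_one ξ hv
      _ = 1 := by simp
      _ < ⊤ := ENNReal.one_lt_top
  -- Fn values
  have hFnb : Fn b = 1 := by
    rw [hFn b, Finset.filter_true_of_mem fun i _ => hb i]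
    field_simp
    simp
  have hFnx : ∀ x, x < a → Fn x = 0 := by
    intro x hx
    rw [hFn x, Finset.filter_false_of_mem fun i _ => not_le.2 (lt_of_lt_of_le hx (ha i))]
    simp
  have hFtb : 1 - η ≤ Ftil b := by
    have := hKS b; rw [hFnb, abs_le] at this; linarith [this.1]
  -- main inequality for each x < a
  have hmain : ∀ x, x < a → 1 - 2 * η ≤ C * (b - x) := by
    intro x hx
    have hFtx : Ftil x ≤ η := by
      have := hKS x; rw [hFnx x hx, abs_le] at this; linarith [this.2]
    have hxb : x ≤ b := le_of_lt (hx.trans hab)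
    have hdiff : Ftil b - Ftil x = ∫ t in Set.Ioc x b, g t := by
      rw [hF b, hF x,
        intervalIntegral.integral_Iic_sub_Iic (hg_int.integrableOn) (hg_int.integrableOn),
        intervalIntegral.integral_of_le hxb]
    have hbd : ∫ t in Set.Ioc x b, g t ≤ C * (b - x) := by
      calc ∫ t in Set.Ioc x b, g t ≤ ∫ _ in Set.Ioc x b, C := by
            apply setIntegral_mono_on hg_int.integrableOn
              (integrableOn_const measure_Ioc_lt_top.ne) measurableSet_Ioc
            exact fun t _ => hg_le t
        _ = (volume (Set.Ioc x b)).toReal * C := by rw [setIntegral_const, smul_eq_mul, Measure.real]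
        _ = C * (b - x) := by
            rw [Real.volume_Ioc, ENNReal.toReal_ofReal (by linarith)]; ring
    linarith [hdiff ▸ hbd]
  -- take the limit x → a
  have hlim : 1 - 2 * η ≤ C * (b - a) := by
    by_contra hcon
    push_neg at hcon
    set δ : ℝ := (1 - 2 * η - C * (b - a)) / (2 * C) with hδ_def
    have hδ_pos : 0 < δ := div_pos (by linarith) (by positivity)
    have := hmain (a - δ) (by linarith)
    have hCδ : C * δ = (1 - 2 * η - C * (b - a)) / 2 := by
      rw [hδ_def, mul_div_assoc', mul_comm C (1 - 2 * η - C * (b - a)),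
        mul_div_mul_right _ _ hC_pos.ne']
    nlinarith [this]
  -- algebra
  have h2η : 0 < 1 - 2 * η := by linarith
  rw [le_div_iff₀ (by positivity)]
  have : C * (b - a) = (b - a) / (Real.sqrt (2 * π) * σ) := by
    rw [hC_def]; field_simp
  rw [this, le_div_iff₀ (by positivity)] at hlim
  nlinarith [hlim]
end
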